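/- Let $h : \mathbb{R}^n \to \mathbb{R}^n$ be a $C^1$ diffeomorphism whose Jacobian matrix $Dh(x)$ at every point $x$ has exactly one nonzero entry per row, with the position of the nonzero entries given by a fixed permutation $\sigma$ independent of $x$ (and $\mathbb{R}^n$ connected). Then $h$ decomposes component-wise: there exist $C^1$ functions $h_1, \dots, h_n : \mathbb{R} \to \mathbb{R}$, each with nowhere-vanishing derivative, such that $h(x)_i = h_i(x_{\sigma(i)})$ for all $x$. -/

import Mathlib

theorem stmt_18 (n : ℕ) (h hinv : (Fin n → ℝ) → (Fin n → ℝ))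
    (hh : ContDiff ℝ 1 h) (hhinv : ContDiff ℝ 1 hinv)
    (hl : Function.LeftInverse hinv h) (hr : Function.RightInverse hinv h)
    (σ : Equiv.Perm (Fin n))
    (hjac : ∀ x : Fin n → ℝ, ∀ i : Fin n,
      fderiv ℝ h x (Pi.single (σ i) 1) i ≠ 0 ∧
        ∀ j : Fin n, j ≠ σ i → fderiv ℝ h x (Pi.single j 1) i = 0) :
    ∃ hcomp : Fin n → ℝ → ℝ,
      (∀ i, ContDiff ℝ 1 (hcomp i)) ∧
        (∀ i t, deriv (hcomp i) t ≠ 0) ∧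
          ∀ (x : Fin n → ℝ) (i : Fin n), h x i = hcomp i (x (σ i)) := by
  have hdiff : Differentiable ℝ h := hh.differentiable one_ne_zero
  -- derivative in directions other than σ i vanishes
  have key : ∀ (z v : Fin n → ℝ) (i : Fin n), v (σ i) = 0 →
      fderiv ℝ h z v i = 0 := by
    intro z v i hv
    have hv' : v = ∑ j, Pi.single j (v j) := by
      simp [Finset.univ_sum_single]
    rw [hv', map_sum]
    rw [Finset.sum_apply]
    apply Finset.sum_eq_zero
    intro j _
    have hsingle : (Pi.single j (v j) : Fin n → ℝ) = (v j) • (Pi.single j 1 : Fin n → ℝ) := by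
      ext k
      by_cases hk : k = j <;> simp [hk, Pi.single_apply]
    rw [hsingle, map_smul]
    rcases eq_or_ne j (σ i) with rfl | hj
    · simp [hv]
    · simp [(hjac z i).2 j hj]
  -- h x i depends only on x (σ i)
  have const : ∀ (x y : Fin n → ℝ) (i : Fin n), x (σ i) = y (σ i) →
      h x i = h y i := by
    intro x y i hxy
    set v := y - x with hv
    have hv0 : v (σ i) = 0 := by simp [hv, hxy]
    set φ : ℝ → ℝ := fun t => h (x + t • v) i with hφ
    have hD : ∀ t : ℝ, HasDerivAt φ 0 t := by
      intro t
      have h1 : HasDerivAt (fun t : ℝ => x + t • v) v t := by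
        simpa using ((hasDerivAt_id t).smul_const v).const_add x
      have h2 : HasFDerivAt h (fderiv ℝ h (x + t • v)) (x + t • v) :=
        (hdiff (x + t • v)).hasFDerivAt
      have h3 : HasDerivAt (fun t : ℝ => h (x + t • v)) (fderiv ℝ h (x + t • v) v) t :=
        h2.comp_hasDerivAt t h1
      have h4 : HasDerivAt φ (fderiv ℝ h (x + t • v) v i) t := by
        exact hasDerivAt_pi.mp h3 i
      simpa [key (x + t • v) v i hv0] using h4
    have hconst : φ 1 = φ 0 :=
      is_const_of_deriv_eq_zero (fun t => (hD t).differentiableAt)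
        (fun t => (hD t).deriv) 1 0
    simpa [hφ, hv] using hconst.symm
  refine ⟨fun i t => h (t • (Pi.single (σ i) 1 : Fin n → ℝ)) i, ?_, ?_, ?_⟩
  · intro i
    have hinner : ContDiff ℝ 1 (fun t : ℝ => t • (Pi.single (σ i) 1 : Fin n → ℝ)) :=
      contDiff_id.smul contDiff_const
    exact (contDiff_pi.mp (hh.comp hinner)) i
  · intro i t
    have h1 : HasDerivAt (fun s : ℝ => s • (Pi.single (σ i) 1 : Fin n → ℝ))
        (Pi.single (σ i) 1 : Fin n → ℝ) t := by
      simpa using (hasDerivAt_id t).smul_const (Pi.single (σ i) 1 : Fin n → ℝ)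
    have h2 := (hdiff (t • (Pi.single (σ i) 1 : Fin n → ℝ))).hasFDerivAt
    have h3 : HasDerivAt (fun s : ℝ => h (s • (Pi.single (σ i) 1 : Fin n → ℝ)))
        (fderiv ℝ h (t • (Pi.single (σ i) 1 : Fin n → ℝ)) (Pi.single (σ i) 1)) t :=
      h2.comp_hasDerivAt t h1
    have h4 : HasDerivAt (fun s : ℝ => h (s • (Pi.single (σ i) 1 : Fin n → ℝ)) i)
        (fderiv ℝ h (t • (Pi.single (σ i) 1 : Fin n → ℝ)) (Pi.single (σ i) 1) i) t := by
      exact hasDerivAt_pi.mp h3 i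
    rw [h4.deriv]
    exact (hjac _ i).1
  · intro x i
    apply const
    simp
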